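/- Let h : ℝⁿ → ℝⁿ be a C¹-diffeomorphism with h(0) = 0, let A = Dh(0) be its derivative at 0, and let b : ℝⁿ → ℝ be a continuous function that is positively homogeneous of degree k (b(t x) = t^k b(x) for all t > 0). If b ∘ h = b, then b ∘ A = b. -/

import Mathlib

/-- If `h : ℝⁿ → ℝⁿ` is a `C¹`-diffeomorphism with `h(0) = 0`, `A = Dh(0)`,
and `b` is a continuous positively homogeneous function of degree `k` with `b ∘ h = b`,
then `b ∘ A = b`. -/
theorem homogeneous_invariant_linearization {n : ℕ}
    (h : (Fin n → ℝ) → (Fin n → ℝ)) (hC1 : ContDiff ℝ 1 h)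
    (hinv : (Fin n → ℝ) → (Fin n → ℝ)) (hinvC1 : ContDiff ℝ 1 hinv)
    (hli : Function.LeftInverse hinv h) (hri : Function.RightInverse hinv h)
    (h0 : h 0 = 0)
    (k : ℕ) (b : (Fin n → ℝ) → ℝ) (hb : Continuous b)
    (hhom : ∀ t : ℝ, 0 < t → ∀ x, b (t • x) = t ^ k * b x)
    (hbh : ∀ x, b (h x) = b x) :
    ∀ x, b (fderiv ℝ h 0 x) = b x := by
  intro x
  set A := fderiv ℝ h 0 with hA
  have hd : HasFDerivAt h A 0 := (hC1.differentiable one_ne_zero 0).hasFDerivAt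
  -- g t = h (t • x) has derivative A x at 0
  have hg : HasDerivAt (fun t : ℝ => h (t • x)) (A x) 0 := by
    have h1 : HasDerivAt (fun t : ℝ => t • x) x 0 := by
      simpa using (hasDerivAt_id (0:ℝ)).smul_const x
    have hd' : HasFDerivAt h A ((0:ℝ) • x) := by simpa using hd
    exact hd'.comp_hasDerivAt (x := (0:ℝ)) h1
  have hslope : Filter.Tendsto (fun t : ℝ => t⁻¹ • h (t • x)) (nhdsWithin 0 (Set.Ioi 0))
      (nhds (A x)) := by
    have := (hasDerivAt_iff_tendsto_slope.mp hg).mono_left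
      (nhdsWithin_mono 0 (fun t ht => ne_of_gt ht : Set.Ioi (0:ℝ) ⊆ {(0:ℝ)}ᶜ))
    refine this.congr' ?_
    filter_upwards [self_mem_nhdsWithin] with t ht
    simp [slope, h0]
  have hbt : Filter.Tendsto (fun t : ℝ => b (t⁻¹ • h (t • x))) (nhdsWithin 0 (Set.Ioi 0))
      (nhds (b (A x))) := (hb.continuousAt).tendsto.comp hslope
  have hconst : ∀ᶠ t : ℝ in nhdsWithin 0 (Set.Ioi 0), b (t⁻¹ • h (t • x)) = b x := by
    filter_upwards [self_mem_nhdsWithin] with t ht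
    have ht' : (0:ℝ) < t := ht
    rw [hhom t⁻¹ (inv_pos.mpr ht'), hbh, hhom t ht']
    field_simp
    rw [← mul_pow, one_div_mul_cancel ht'.ne', one_pow, one_mul]
  have key : Filter.Tendsto (fun _ : ℝ => b x) (nhdsWithin 0 (Set.Ioi 0)) (nhds (b (A x))) :=
    hbt.congr' hconst
  haveI : (nhdsWithin (0:ℝ) (Set.Ioi 0)).NeBot := nhdsGT_neBot 0
  exact tendsto_nhds_unique key tendsto_const_nhds
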